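/- Let (Φ, ≤, D; ⊗, d, ↓, e) be an ordered valuation algebra and define the extended relation φ ≤' ψ ⟺ d(φ) ≤ d(ψ) and φ ⊗ e_{d(ψ)} ≤ ψ. Then: (1) if φ₁ ≤' ψ₁ and φ₂ ≤' ψ₂, then φ₁ ⊗ φ₂ ≤' ψ₁ ⊗ ψ₂; (2) if φ ≤' ψ and x ≤ d(φ), then φ↓x ≤' ψ↓x; moreover (φ ⊗ e_{d(ψ)})↓x = φ↓x for x ≤ d(φ). -/
import Mathlib


/-- A (stable) ordered valuation algebra `(Φ, ≤, D; ⊗, d, ↓, e)`: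
a partially ordered set `Φ` of valuations, a bounded lattice `D` of domains,
a combination `comb`, a domain map `dom`, a focusing operation `focus`
(a total extension of the partial operation `φ↓x`, defined for `x ≤ dom φ`),
and identity elements `e x`. -/
structure OVA (Φ : Type*) (D : Type*) [PartialOrder Φ] [Lattice D] [BoundedOrder D] where
  comb : Φ → Φ → Φ
  dom : Φ → D
  focus : Φ → D → Φ
  e : D → Φ
  comb_comm : ∀ φ ψ, comb φ ψ = comb ψ φ
  comb_assoc : ∀ φ ψ χ, comb (comb φ ψ) χ = comb φ (comb ψ χ)
  dom_eq_of_le : ∀ {φ ψ}, φ ≤ ψ → dom φ = dom ψ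
  dom_e : ∀ x, dom (e x) = x
  e_comb_e : ∀ x y, comb (e x) (e y) = e (x ⊔ y)
  comb_e : ∀ (φ : Φ) (x : D), dom φ = x → comb φ (e x) = φ
  focus_e : ∀ {x y : D}, x ≤ y → focus (e y) x = e x
  dom_comb : ∀ φ ψ, dom (comb φ ψ) = dom φ ⊔ dom ψ
  dom_focus : ∀ {φ : Φ} {x : D}, x ≤ dom φ → dom (focus φ x) = x
  focus_focus : ∀ {φ : Φ} {x y : D}, x ≤ y → y ≤ dom φ →
    focus (focus φ y) x = focus φ x
  focus_comb : ∀ φ ψ, focus (comb φ ψ) (dom φ) = comb φ (focus ψ (dom φ ⊓ dom ψ))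
  comb_mono : ∀ {φ₁ ψ₁ φ₂ ψ₂ : Φ}, φ₁ ≤ ψ₁ → φ₂ ≤ ψ₂ → comb φ₁ φ₂ ≤ comb ψ₁ ψ₂
  focus_mono : ∀ {φ ψ : Φ} {x : D}, φ ≤ ψ → x ≤ dom φ → focus φ x ≤ focus ψ x

/-- the canonically extended relation
`φ ≤' ψ ↔ d φ ≤ d ψ ∧ φ ⊗ e_{d ψ} ≤ ψ` of an ordered valuation algebra is
preserved by combination and by focusing; moreover
`(φ ⊗ e_{d ψ})↓x = φ↓x` for `x ≤ d φ`. -/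
theorem OVA_extended_order {Φ D : Type*} [PartialOrder Φ] [Lattice D] [BoundedOrder D]
    (V : OVA Φ D) :
    -- (1) combination preserves ≤'
    (∀ φ₁ ψ₁ φ₂ ψ₂ : Φ,
      (V.dom φ₁ ≤ V.dom ψ₁ ∧ V.comb φ₁ (V.e (V.dom ψ₁)) ≤ ψ₁) →
      (V.dom φ₂ ≤ V.dom ψ₂ ∧ V.comb φ₂ (V.e (V.dom ψ₂)) ≤ ψ₂) →
      (V.dom (V.comb φ₁ φ₂) ≤ V.dom (V.comb ψ₁ ψ₂) ∧
        V.comb (V.comb φ₁ φ₂) (V.e (V.dom (V.comb ψ₁ ψ₂))) ≤ V.comb ψ₁ ψ₂)) ∧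
    -- (2) focusing preserves ≤', and (φ ⊗ e_{d ψ})↓x = φ↓x
    (∀ (φ ψ : Φ) (x : D),
      (V.dom φ ≤ V.dom ψ ∧ V.comb φ (V.e (V.dom ψ)) ≤ ψ) → x ≤ V.dom φ →
      ((V.dom (V.focus φ x) ≤ V.dom (V.focus ψ x) ∧
         V.comb (V.focus φ x) (V.e (V.dom (V.focus ψ x))) ≤ V.focus ψ x) ∧
       V.focus (V.comb φ (V.e (V.dom ψ))) x = V.focus φ x)) := by
  -- key lemma: (φ ⊗ e_y)↓x = φ↓x for x ≤ d φ ≤ y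
  have key : ∀ (φ : Φ) (y x : D), V.dom φ ≤ y → x ≤ V.dom φ →
      V.focus (V.comb φ (V.e y)) x = V.focus φ x := by
    intro φ y x hdy hx
    have h1 : V.focus (V.comb φ (V.e y)) (V.dom φ) = φ := by
      have := V.focus_comb φ (V.e y)
      rw [V.dom_e, inf_eq_left.mpr hdy, V.focus_e hdy, V.comb_e φ _ rfl] at this
      exact this
    have hdom : V.dom φ ≤ V.dom (V.comb φ (V.e y)) := by
      rw [V.dom_comb]; exact le_sup_left
    calc V.focus (V.comb φ (V.e y)) x
        = V.focus (V.focus (V.comb φ (V.e y)) (V.dom φ)) x :=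
          (V.focus_focus hx hdom).symm
      _ = V.focus φ x := by rw [h1]
  constructor
  · rintro φ₁ ψ₁ φ₂ ψ₂ ⟨h1, h1'⟩ ⟨h2, h2'⟩
    constructor
    · rw [V.dom_comb, V.dom_comb]
      exact sup_le_sup h1 h2
    · rw [V.dom_comb, ← V.e_comb_e]
      calc V.comb (V.comb φ₁ φ₂) (V.comb (V.e (V.dom ψ₁)) (V.e (V.dom ψ₂)))
          = V.comb (V.comb φ₁ (V.e (V.dom ψ₁))) (V.comb φ₂ (V.e (V.dom ψ₂))) := by
            rw [V.comb_assoc, V.comb_assoc, ← V.comb_assoc φ₂,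
              V.comb_comm φ₂ (V.e (V.dom ψ₁)), V.comb_assoc]
        _ ≤ V.comb ψ₁ ψ₂ := V.comb_mono h1' h2'
  · rintro φ ψ x ⟨hd, hc⟩ hx
    have hxψ : x ≤ V.dom ψ := le_trans hx hd
    have hk := key φ (V.dom ψ) x hd hx
    refine ⟨⟨?_, ?_⟩, hk⟩
    · rw [V.dom_focus hx, V.dom_focus hxψ]
    · rw [V.dom_focus hxψ, V.comb_e _ _ (V.dom_focus hx), ← hk]
      exact V.focus_mono hc (by rw [V.dom_comb, V.dom_e]; exact le_trans hxψ le_sup_right)
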